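/- Let Γ be an extension-parallel graph and let 𝒜 be the set of arc sets of directed o–d paths of Γ. Then for all pairwise distinct A, B, C ∈ 𝒜 we have A∩B ⊆ A∩C or A∩C ⊆ A∩B (nested intersections); equivalently, for all pairwise distinct A, B, C ∈ 𝒜, A∩(C∖B) = ∅ or A∩(B∖C) = ∅ (no bad configuration). -/

import Mathlib

/-- A congestion game with `n` players on a finite resource type `R`:
each player has a finite set of actions (each action a set of resources),
and each resource has a delay function `ℕ → ℝ`. -/
structure CGame (R : Type) [DecidableEq R] [Fintype R] (n : ℕ) where
  actions : Fin n → Finset (Finset R)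
  delay : R → ℕ → ℝ

namespace CGame

variable {R : Type} [DecidableEq R] [Fintype R] {n : ℕ}

/-- The congestion `x(A)_r`: number of players using resource `r` in profile `A`. -/
def congestion (_G : CGame R n) (A : Fin n → Finset R) (r : R) : ℕ :=
  (Finset.univ.filter fun i => r ∈ A i).card

/-- The cost of player `i` in profile `A`. -/
def cost (G : CGame R n) (A : Fin n → Finset R) (i : Fin n) : ℝ :=
  ∑ r ∈ A i, G.delay r (G.congestion A r)

/-- `A` is an outcome: each player plays one of his actions. -/
def IsOutcome (G : CGame R n) (A : Fin n → Finset R) : Prop :=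
  ∀ i, A i ∈ G.actions i

/-- `A` is a (pure) Nash equilibrium. -/
def IsNash (G : CGame R n) (A : Fin n → Finset R) : Prop :=
  G.IsOutcome A ∧ ∀ i, ∀ B ∈ G.actions i, G.cost A i ≤ G.cost (Function.update A i B) i

/-- The subgame induced by the first player playing `a`. -/
def subgame (G : CGame R (n + 1)) (a : Finset R) : CGame R n where
  actions := fun i => G.actions i.succ
  delay := fun r y => G.delay r (y + if r ∈ a then 1 else 0)

/-- The subgame induced by the first `m` players playing `P`. -/
def subgameMany {m k : ℕ} (G : CGame R (m + k)) (P : Fin m → Finset R) : CGame R k where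
  actions := fun i => G.actions (Fin.natAdd m i)
  delay := fun r y => G.delay r (y + (Finset.univ.filter fun i : Fin m => r ∈ P i).card)

/-- `G^k`: the game on the first `min k n` players. -/
def truncate (G : CGame R n) (k : ℕ) : CGame R (min k n) where
  actions := fun i => G.actions (Fin.castLE (min_le_right k n) i)
  delay := G.delay

/-- The game reordered so that the player in position `i` is player `σ i`. -/
def reorder (G : CGame R n) (σ : Equiv.Perm (Fin n)) : CGame R n where
  actions := fun i => G.actions (σ i)
  delay := G.delay

/-- Subgame-perfect outcomes with respect to the order `1, …, n`. -/
def IsSPO : {n : ℕ} → CGame R n → (Fin n → Finset R) → Prop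
  | 0, _, _ => True
  | _ + 1, G, A =>
      A 0 ∈ G.actions 0 ∧
      ∃ f : Finset R → (Fin _ → Finset R),
        (∀ a ∈ G.actions 0, IsSPO (G.subgame a) (f a)) ∧
        f (A 0) = Fin.tail A ∧
        ∀ a ∈ G.actions 0,
          G.cost (Fin.cons (A 0) (f (A 0))) 0 ≤ G.cost (Fin.cons a (f a)) 0

/-- `k`-lookahead outcomes with respect to the order `1, …, n`. -/
def IsKLA (k : ℕ) : {n : ℕ} → CGame R n → (Fin n → Finset R) → Prop
  | 0, _, _ => True
  | n + 1, G, A =>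
      (∃ (hk : 0 < min k (n + 1)) (B : Fin (min k (n + 1)) → Finset R),
          IsSPO (G.truncate k) B ∧ B ⟨0, hk⟩ = A 0) ∧
      IsKLA k (G.subgame (A 0)) (Fin.tail A)

/-- `A` is a subgame-perfect outcome of `G` with respect to some order of the players. -/
def IsSPOutcome (G : CGame R n) (A : Fin n → Finset R) : Prop :=
  ∃ σ : Equiv.Perm (Fin n), IsSPO (G.reorder σ) (A ∘ σ)

/-- `A` is a `k`-lookahead outcome of `G` with respect to some order of the players. -/
def IsKLO (k : ℕ) (G : CGame R n) (A : Fin n → Finset R) : Prop :=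
  ∃ σ : Equiv.Perm (Fin n), IsKLA k (G.reorder σ) (A ∘ σ)

/-- The cost of player `i` when only the players in `s` play (profile restricted to `s`). -/
def costOn (G : CGame R n) (s : Finset (Fin n)) (A : Fin n → Finset R) (i : Fin n) : ℝ :=
  ∑ r ∈ A i, G.delay r ((s.filter fun j => r ∈ A j).card)

/-- `G` is generic: in every restriction of the game to a subset of the players,
a player's cost changes whenever his own action changes. -/
def Generic (G : CGame R n) : Prop :=
  ∀ s : Finset (Fin n), ∀ A B : Fin n → Finset R,
    (∀ i ∈ s, A i ∈ G.actions i) → (∀ i ∈ s, B i ∈ G.actions i) →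
    ∀ j ∈ s, A j ≠ B j → G.costOn s A j ≠ G.costOn s B j

/-- Utilitarian social cost. -/
def SC (G : CGame R n) (A : Fin n → Finset R) : ℝ :=
  ∑ i, G.cost A i

/-- Minimum social cost over all outcomes. -/
noncomputable def optSC (G : CGame R n) : ℝ :=
  sInf {y | ∃ A, G.IsOutcome A ∧ y = G.SC A}

/-- The `k`-Lookahead Price of Anarchy. -/
noncomputable def kLPoA (G : CGame R n) (k : ℕ) : ℝ :=
  sSup {y | ∃ A, IsKLO k G A ∧ y = G.SC A / G.optSC}

/-- The Price of Anarchy. -/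
noncomputable def PoA (G : CGame R n) : ℝ :=
  sSup {y | ∃ A, G.IsNash A ∧ y = G.SC A / G.optSC}

/-- Opportunity cost `O_A` of an outcome `A` in a symmetric game with action set `𝒜`. -/
noncomputable def oppCost (G : CGame R n) (𝒜 : Finset (Finset R)) (A : Fin n → Finset R) : ℝ :=
  sInf {y | ∃ P ∈ 𝒜, y = ∑ r ∈ P, G.delay r (G.congestion A r + 1)}

/-- Worst cost (egalitarian social cost) `W_A` of an outcome `A`. -/
noncomputable def worstCost (G : CGame R n) (A : Fin n → Finset R) : ℝ :=
  sSup {y | ∃ i, y = G.cost A i}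

/-- Rosenthal's potential function. -/
def potential (G : CGame R n) (A : Fin n → Finset R) : ℝ :=
  ∑ r : R, ∑ i ∈ Finset.Icc 1 (G.congestion A r), G.delay r i

end CGame
/-- Syntax trees of extension-parallel graphs: a single arc; parallel composition;
series composition of a single arc with an EP graph (arc first or arc last). -/
inductive EPTree : Type
  | edge : EPTree
  | parallel : EPTree → EPTree → EPTree
  | extHead : EPTree → EPTree
  | extTail : EPTree → EPTree

namespace EPTree

/-- The arcs of an extension-parallel graph. -/
def Arc : EPTree → Type
  | edge => Unit
  | parallel t₁ t₂ => t₁.Arc ⊕ t₂.Arc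
  | extHead t => Unit ⊕ t.Arc
  | extTail t => t.Arc ⊕ Unit

def arcDecEq : (t : EPTree) → DecidableEq t.Arc
  | edge => inferInstanceAs (DecidableEq Unit)
  | parallel t₁ t₂ =>
      letI := t₁.arcDecEq; letI := t₂.arcDecEq
      inferInstanceAs (DecidableEq (t₁.Arc ⊕ t₂.Arc))
  | extHead t =>
      letI := t.arcDecEq
      inferInstanceAs (DecidableEq (Unit ⊕ t.Arc))
  | extTail t =>
      letI := t.arcDecEq
      inferInstanceAs (DecidableEq (t.Arc ⊕ Unit))

instance (t : EPTree) : DecidableEq t.Arc := t.arcDecEq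

def arcFintype : (t : EPTree) → Fintype t.Arc
  | edge => inferInstanceAs (Fintype Unit)
  | parallel t₁ t₂ =>
      letI := t₁.arcFintype; letI := t₂.arcFintype
      inferInstanceAs (Fintype (t₁.Arc ⊕ t₂.Arc))
  | extHead t =>
      letI := t.arcFintype
      inferInstanceAs (Fintype (Unit ⊕ t.Arc))
  | extTail t =>
      letI := t.arcFintype
      inferInstanceAs (Fintype (t.Arc ⊕ Unit))

instance (t : EPTree) : Fintype t.Arc := t.arcFintype

/-- The set of arc sets of directed `o`–`d` paths of an extension-parallel graph. -/
def paths : (t : EPTree) → Finset (Finset t.Arc)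
  | edge => {(Finset.univ : Finset Unit)}
  | parallel t₁ t₂ =>
      (t₁.paths.image fun P => P.image Sum.inl) ∪ (t₂.paths.image fun P => P.image Sum.inr)
  | extHead t => t.paths.image fun P => insert (Sum.inl ()) (P.image Sum.inr)
  | extTail t => t.paths.image fun P => insert (Sum.inr ()) (P.image Sum.inl)

end EPTree

/-- Syntax trees of series-parallel graphs: a single arc; series composition;
parallel composition. -/
inductive SPTree : Type
  | edge : SPTree
  | series : SPTree → SPTree → SPTree
  | parallel : SPTree → SPTree → SPTree

namespace SPTree

/-- The arcs of a series-parallel graph. -/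
def Arc : SPTree → Type
  | edge => Unit
  | series t₁ t₂ => t₁.Arc ⊕ t₂.Arc
  | parallel t₁ t₂ => t₁.Arc ⊕ t₂.Arc

def arcDecEq : (t : SPTree) → DecidableEq t.Arc
  | edge => inferInstanceAs (DecidableEq Unit)
  | series t₁ t₂ =>
      letI := t₁.arcDecEq; letI := t₂.arcDecEq
      inferInstanceAs (DecidableEq (t₁.Arc ⊕ t₂.Arc))
  | parallel t₁ t₂ =>
      letI := t₁.arcDecEq; letI := t₂.arcDecEq
      inferInstanceAs (DecidableEq (t₁.Arc ⊕ t₂.Arc))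

instance (t : SPTree) : DecidableEq t.Arc := t.arcDecEq

def arcFintype : (t : SPTree) → Fintype t.Arc
  | edge => inferInstanceAs (Fintype Unit)
  | series t₁ t₂ =>
      letI := t₁.arcFintype; letI := t₂.arcFintype
      inferInstanceAs (Fintype (t₁.Arc ⊕ t₂.Arc))
  | parallel t₁ t₂ =>
      letI := t₁.arcFintype; letI := t₂.arcFintype
      inferInstanceAs (Fintype (t₁.Arc ⊕ t₂.Arc))

instance (t : SPTree) : Fintype t.Arc := t.arcFintype

/-- The set of arc sets of directed `o`–`d` paths of a series-parallel graph. -/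
def paths : (t : SPTree) → Finset (Finset t.Arc)
  | edge => {(Finset.univ : Finset Unit)}
  | series t₁ t₂ =>
      (t₁.paths ×ˢ t₂.paths).image fun p => p.1.image Sum.inl ∪ p.2.image Sum.inr
  | parallel t₁ t₂ =>
      (t₁.paths.image fun P => P.image Sum.inl) ∪ (t₂.paths.image fun P => P.image Sum.inr)

/-- A series-parallel graph is extension-parallel if in every series composition one of
the two parts is a single arc. -/
def IsEP : SPTree → Prop
  | edge => True
  | series t₁ t₂ => (t₁ = edge ∧ t₂.IsEP) ∨ (t₂ = edge ∧ t₁.IsEP)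
  | parallel t₁ t₂ => t₁.IsEP ∧ t₂.IsEP

end SPTree

/-- The symmetric network congestion game with `n` players on an extension-parallel
graph `t` with delay functions `d`. -/
def SNCGep (t : EPTree) (d : t.Arc → ℕ → ℝ) (n : ℕ) : CGame t.Arc n where
  actions := fun _ => t.paths
  delay := d

/-- The symmetric network congestion game with `n` players on a series-parallel
graph `t` with delay functions `d`. -/
def SNCGsp (t : SPTree) (d : t.Arc → ℕ → ℝ) (n : ℕ) : CGame t.Arc n where
  actions := fun _ => t.paths
  delay := d

private lemma ep_insert_inter {α : Type*} [DecidableEq α] (e : Unit ⊕ α) (he : ∀ a : α, e ≠ Sum.inr a)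
    (P Q : Finset α) :
    insert e (P.image (Sum.inr : α → Unit ⊕ α)) ∩ insert e (Q.image (Sum.inr : α → Unit ⊕ α))
      = insert e ((P ∩ Q).image (Sum.inr : α → Unit ⊕ α)) := by
  ext x
  simp only [Finset.mem_inter, Finset.mem_insert, Finset.mem_image]
  constructor
  · rintro ⟨hP, hQ⟩
    rcases hP with h | ⟨a, ha, rfl⟩
    · exact Or.inl h
    · rcases hQ with h | ⟨b, hb, hba⟩
      · exact absurd h.symm (he a)
      · refine Or.inr ⟨a, ⟨ha, ?_⟩, rfl⟩
        rcases Sum.inr_injective hba with rfl; exact hb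
  · rintro (rfl | ⟨a, ha, rfl⟩)
    · exact ⟨Or.inl rfl, Or.inl rfl⟩
    · rcases ha with ⟨h1, h2⟩
      exact ⟨Or.inr ⟨a, h1, rfl⟩, Or.inr ⟨a, h2, rfl⟩⟩

private lemma ep_insert_inter' {α : Type*} [DecidableEq α] (e : α ⊕ Unit)
    (he : ∀ a : α, e ≠ Sum.inl a) (P Q : Finset α) :
    insert e (P.image (Sum.inl : α → α ⊕ Unit)) ∩ insert e (Q.image (Sum.inl : α → α ⊕ Unit))
      = insert e ((P ∩ Q).image (Sum.inl : α → α ⊕ Unit)) := by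
  ext x
  simp only [Finset.mem_inter, Finset.mem_insert, Finset.mem_image]
  constructor
  · rintro ⟨hP, hQ⟩
    rcases hP with h | ⟨a, ha, rfl⟩
    · exact Or.inl h
    · rcases hQ with h | ⟨b, hb, hba⟩
      · exact absurd h.symm (he a)
      · refine Or.inr ⟨a, ⟨ha, ?_⟩, rfl⟩
        rcases Sum.inl_injective hba with rfl; exact hb
  · rintro (rfl | ⟨a, ha, rfl⟩)
    · exact ⟨Or.inl rfl, Or.inl rfl⟩
    · rcases ha with ⟨h1, h2⟩
      exact ⟨Or.inr ⟨a, h1, rfl⟩, Or.inr ⟨a, h2, rfl⟩⟩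

private lemma ep_nested_aux : ∀ (t : EPTree) (A B C : Finset t.Arc),
    A ∈ t.paths → B ∈ t.paths → C ∈ t.paths →
    A ∩ B ⊆ A ∩ C ∨ A ∩ C ⊆ A ∩ B := by
  intro t
  induction t with
  | edge =>
    intro A B C hA hB hC
    simp only [EPTree.paths, Finset.mem_singleton] at hA hB hC
    replace hA := Finset.mem_singleton.1 hA; replace hB := Finset.mem_singleton.1 hB
    replace hC := Finset.mem_singleton.1 hC
    subst hA; subst hB; subst hC
    exact Or.inl subset_rfl
  | parallel t₁ t₂ ih₁ ih₂ =>
    intro A B C hA hB hC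
    simp only [EPTree.paths, Finset.mem_union, Finset.mem_image] at hA hB hC
    -- disjointness helper
    have hdisj : ∀ (P : Finset t₁.Arc) (Q : Finset t₂.Arc),
        (P.image Sum.inl) ∩ (Q.image Sum.inr) = ∅ := by
      intro P Q
      rw [Finset.eq_empty_iff_forall_notMem]
      intro x hx
      rcases Finset.mem_inter.1 hx with ⟨h1, h2⟩
      rcases Finset.mem_image.1 h1 with ⟨a, _, rfl⟩
      rcases Finset.mem_image.1 h2 with ⟨b, _, hb⟩
      exact Sum.inr_ne_inl hb
    have hdisj' : ∀ (P : Finset t₂.Arc) (Q : Finset t₁.Arc),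
        (P.image Sum.inr) ∩ (Q.image Sum.inl) = ∅ := by
      intro P Q
      rw [Finset.eq_empty_iff_forall_notMem]
      intro x hx
      rcases Finset.mem_inter.1 hx with ⟨h1, h2⟩
      rcases Finset.mem_image.1 h1 with ⟨a, _, rfl⟩
      rcases Finset.mem_image.1 h2 with ⟨b, _, hb⟩
      exact Sum.inl_ne_inr hb
    rcases hA with ⟨P, hP, rfl⟩ | ⟨P, hP, rfl⟩
    · rcases hB with ⟨Q, hQ, rfl⟩ | ⟨Q, hQ, rfl⟩
      · rcases hC with ⟨S, hS, rfl⟩ | ⟨S, hS, rfl⟩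
        · rcases ih₁ P Q S hP hQ hS with h | h
          · left
            erw [← Finset.image_inter _ _ Sum.inl_injective,
              ← Finset.image_inter _ _ Sum.inl_injective]
            exact Finset.image_subset_image h
          · right
            erw [← Finset.image_inter _ _ Sum.inl_injective,
              ← Finset.image_inter _ _ Sum.inl_injective]
            exact Finset.image_subset_image h
        · right; erw [hdisj]; exact Finset.empty_subset _
      · left; erw [hdisj]; exact Finset.empty_subset _
    · rcases hB with ⟨Q, hQ, rfl⟩ | ⟨Q, hQ, rfl⟩
      · left; erw [hdisj']; exact Finset.empty_subset _
      · rcases hC with ⟨S, hS, rfl⟩ | ⟨S, hS, rfl⟩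
        · right; erw [hdisj']; exact Finset.empty_subset _
        · rcases ih₂ P Q S hP hQ hS with h | h
          · left
            erw [← Finset.image_inter _ _ Sum.inr_injective,
              ← Finset.image_inter _ _ Sum.inr_injective]
            exact Finset.image_subset_image h
          · right
            erw [← Finset.image_inter _ _ Sum.inr_injective,
              ← Finset.image_inter _ _ Sum.inr_injective]
            exact Finset.image_subset_image h
  | extHead t ih =>
    intro A B C hA hB hC
    simp only [EPTree.paths, Finset.mem_image] at hA hB hC
    rcases hA with ⟨P, hP, rfl⟩
    rcases hB with ⟨Q, hQ, rfl⟩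
    rcases hC with ⟨S, hS, rfl⟩
    have he : ∀ a : t.Arc, (Sum.inl () : Unit ⊕ t.Arc) ≠ Sum.inr a := fun a h =>
      Sum.inl_ne_inr h
    rcases ih P Q S hP hQ hS with h | h
    · left
      erw [ep_insert_inter _ he, ep_insert_inter _ he]
      exact Finset.insert_subset_insert _ (Finset.image_subset_image h)
    · right
      erw [ep_insert_inter _ he, ep_insert_inter _ he]
      exact Finset.insert_subset_insert _ (Finset.image_subset_image h)
  | extTail t ih =>
    intro A B C hA hB hC
    simp only [EPTree.paths, Finset.mem_image] at hA hB hC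
    rcases hA with ⟨P, hP, rfl⟩
    rcases hB with ⟨Q, hQ, rfl⟩
    rcases hC with ⟨S, hS, rfl⟩
    have he : ∀ a : t.Arc, (Sum.inr () : t.Arc ⊕ Unit) ≠ Sum.inl a := fun a h =>
      Sum.inr_ne_inl h
    rcases ih P Q S hP hQ hS with h | h
    · left
      erw [ep_insert_inter' _ he, ep_insert_inter' _ he]
      exact Finset.insert_subset_insert _ (Finset.image_subset_image h)
    · right
      erw [ep_insert_inter' _ he, ep_insert_inter' _ he]
      exact Finset.insert_subset_insert _ (Finset.image_subset_image h)

/-- Nested intersections property of extension-parallel graphs: for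
pairwise distinct `o`–`d` paths `A, B, C`, the intersections `A ∩ B` and `A ∩ C` are
nested; equivalently, there is no bad configuration. -/
theorem ep_nested_intersections (t : EPTree) (A B C : Finset t.Arc)
    (hA : A ∈ t.paths) (hB : B ∈ t.paths) (hC : C ∈ t.paths)
    (hAB : A ≠ B) (hAC : A ≠ C) (hBC : B ≠ C) :
    (A ∩ B ⊆ A ∩ C ∨ A ∩ C ⊆ A ∩ B) ∧
    (A ∩ (C \ B) = ∅ ∨ A ∩ (B \ C) = ∅) := by
  have h := ep_nested_aux t A B C hA hB hC
  refine ⟨h, ?_⟩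
  rcases h with h | h
  · right
    rw [Finset.eq_empty_iff_forall_notMem]
    intro x hx
    rcases Finset.mem_inter.1 hx with ⟨hxA, hxBC⟩
    rcases Finset.mem_sdiff.1 hxBC with ⟨hxB, hxC⟩
    exact hxC (Finset.mem_inter.1 (h (Finset.mem_inter.2 ⟨hxA, hxB⟩))).2
  · left
    rw [Finset.eq_empty_iff_forall_notMem]
    intro x hx
    rcases Finset.mem_inter.1 hx with ⟨hxA, hxCB⟩
    rcases Finset.mem_sdiff.1 hxCB with ⟨hxC, hxB⟩
    exact hxB (Finset.mem_inter.1 (h (Finset.mem_inter.2 ⟨hxA, hxC⟩))).2
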